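/- Under the same setting, for any downward closed Λ of cardinality n and any v ∈ P_Λ, one has ‖u − w_n‖ ≤ (1 + 2√(C_{2n−1}^d)) ‖u − v‖_{L^∞(Γ)}. -/

import Mathlib

open MeasureTheory

def DownwardClosed {d : ℕ} (Λ : Finset (Fin d → ℕ)) : Prop :=
  ∀ ν ∈ Λ, ∀ μ : Fin d → ℕ, μ ≤ ν → μ ∈ Λ

noncomputable def polySpace {d : ℕ} (Λ : Finset (Fin d → ℕ)) :
    Submodule ℝ ((Fin d → ℝ) → ℝ) :=
  Submodule.span ℝ {f | ∃ ν ∈ Λ, f = fun y => ∏ j, y j ^ ν j}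

noncomputable def L2norm {d : ℕ} (ρ : Measure (Fin d → ℝ)) (f : (Fin d → ℝ) → ℝ) : ℝ :=
  Real.sqrt (∫ y, f y ^ 2 ∂ρ)

noncomputable def empNorm {d m : ℕ} (y : Fin m → (Fin d → ℝ)) (f : (Fin d → ℝ) → ℝ) : ℝ :=
  Real.sqrt ((∑ i, f (y i) ^ 2) / m)

/-! ### Auxiliary lemmas -/

lemma aux_polySpace_prop {d : ℕ} {Λ : Finset (Fin d → ℕ)} {p : (Fin d → ℝ) → ℝ}
    (hp : p ∈ polySpace Λ) :
    Continuous p ∧ ∃ M : ℝ, ∀ z : Fin d → ℝ, (∀ j, |z j| ≤ 1) → |p z| ≤ M := by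
  refine Submodule.span_induction ?_ ?_ ?_ ?_ hp
  · rintro f ⟨ν, -, rfl⟩
    refine ⟨by continuity, 1, fun z hz => ?_⟩
    have : |∏ j, z j ^ ν j| = ∏ j, |z j| ^ ν j := by
      rw [Finset.abs_prod]; simp [abs_pow]
    rw [this]
    exact Finset.prod_le_one (fun j _ => by positivity)
      (fun j _ => pow_le_one₀ (abs_nonneg _) (hz j))
  · exact ⟨continuous_const.congr (fun _ => rfl), 0, fun z _ => by simp⟩
  · rintro f g - - ⟨hfc, Mf, hMf⟩ ⟨hgc, Mg, hMg⟩
    refine ⟨hfc.add hgc, Mf + Mg, fun z hz => ?_⟩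
    calc |f z + g z| ≤ |f z| + |g z| := abs_add_le _ _
    _ ≤ Mf + Mg := add_le_add (hMf z hz) (hMg z hz)
  · rintro c f - ⟨hfc, Mf, hMf⟩
    refine ⟨hfc.const_smul c, |c| * Mf, fun z hz => ?_⟩
    have : |(c • f) z| = |c| * |f z| := by simp [abs_mul]
    rw [this]
    exact mul_le_mul_of_nonneg_left (hMf z hz) (abs_nonneg c)

lemma aux_polySpace_memLp {d : ℕ} {ρ : Measure (Fin d → ℝ)} [IsProbabilityMeasure ρ]
    (hsupp : ∀ᵐ z ∂ρ, ∀ j, |z j| ≤ 1)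
    {Λ : Finset (Fin d → ℕ)} {p : (Fin d → ℝ) → ℝ} (hp : p ∈ polySpace Λ) :
    MemLp p 2 ρ := by
  obtain ⟨hc, M, hM⟩ := aux_polySpace_prop hp
  exact MemLp.of_bound hc.aestronglyMeasurable M
    (hsupp.mono fun z hz => by rw [Real.norm_eq_abs]; exact hM z hz)

lemma aux_L2norm_eq {d : ℕ} (ρ : Measure (Fin d → ℝ)) {f : (Fin d → ℝ) → ℝ}
    (hf : MemLp f 2 ρ) : L2norm ρ f = (eLpNorm f 2 ρ).toReal := by
  rw [hf.eLpNorm_eq_integral_rpow_norm two_ne_zero ENNReal.ofNat_ne_top,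
    ENNReal.toReal_ofReal (by positivity)]
  have h2 : (2 : ENNReal).toReal = 2 := by simp
  rw [h2]
  have hfun : (fun a => ‖f a‖ ^ (2:ℝ)) = fun a => f a ^ 2 := by
    funext a
    rw [show (2:ℝ) = ((2:ℕ):ℝ) by norm_num, Real.rpow_natCast, Real.norm_eq_abs, sq_abs]
  rw [show ((2:ℝ))⁻¹ = 1/2 by norm_num, ← Real.sqrt_eq_rpow]
  unfold L2norm
  congr 1
  exact integral_congr_ae (Filter.Eventually.of_forall fun a => (congrFun hfun a).symm)

lemma aux_L2norm_add_le {d : ℕ} (ρ : Measure (Fin d → ℝ)) [IsProbabilityMeasure ρ]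
    {f g : (Fin d → ℝ) → ℝ} (hf : MemLp f 2 ρ) (hg : MemLp g 2 ρ) :
    L2norm ρ (f + g) ≤ L2norm ρ f + L2norm ρ g := by
  rw [aux_L2norm_eq ρ (hf.add hg), aux_L2norm_eq ρ hf, aux_L2norm_eq ρ hg,
    ← ENNReal.toReal_add hf.2.ne hg.2.ne]
  exact ENNReal.toReal_mono (ENNReal.add_ne_top.2 ⟨hf.2.ne, hg.2.ne⟩)
    (eLpNorm_add_le hf.1 hg.1 one_le_two)

lemma aux_L2norm_le_bound {d : ℕ} (ρ : Measure (Fin d → ℝ)) [IsProbabilityMeasure ρ]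
    {f : (Fin d → ℝ) → ℝ} {B : ℝ} (hB0 : 0 ≤ B) (hmeas : AEStronglyMeasurable f ρ)
    (h : ∀ᵐ z ∂ρ, |f z| ≤ B) : L2norm ρ f ≤ B := by
  have hint : Integrable (fun z => f z ^ 2) ρ := by
    refine Integrable.mono' (integrable_const (B^2))
      ((hmeas.aemeasurable.pow_const 2).aestronglyMeasurable) ?_
    filter_upwards [h] with z hz
    rw [Real.norm_eq_abs]
    nlinarith [abs_nonneg (f z), sq_abs (f z), abs_pow (f z) 2]
  have hle : ∫ z, f z ^ 2 ∂ρ ≤ ∫ _z, B ^ 2 ∂ρ := by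
    refine integral_mono_ae hint (integrable_const _) ?_
    filter_upwards [h] with z hz
    nlinarith [abs_nonneg (f z), sq_abs (f z)]
  have : ∫ _z, B ^ 2 ∂ρ = B ^ 2 := by simp
  calc L2norm ρ f ≤ Real.sqrt (B ^ 2) := Real.sqrt_le_sqrt (by rw [← this]; exact hle)
  _ = B := Real.sqrt_sq hB0

lemma aux_empNorm_eq {d m : ℕ} (y : Fin m → (Fin d → ℝ)) (f : (Fin d → ℝ) → ℝ) :
    empNorm y f = ‖(WithLp.equiv 2 (Fin m → ℝ)).symm (fun i => f (y i))‖ / Real.sqrt m := by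
  rw [EuclideanSpace.norm_eq]
  unfold empNorm
  rw [Real.sqrt_div (by positivity)]
  congr 2
  refine Finset.sum_congr rfl fun i _ => ?_
  simp [Real.norm_eq_abs, sq_abs]

lemma aux_empNorm_add_le {d m : ℕ} (y : Fin m → (Fin d → ℝ)) (f g : (Fin d → ℝ) → ℝ) :
    empNorm y (f + g) ≤ empNorm y f + empNorm y g := by
  rw [aux_empNorm_eq, aux_empNorm_eq, aux_empNorm_eq, ← add_div, div_eq_mul_inv,
    div_eq_mul_inv]
  refine mul_le_mul_of_nonneg_right ?_ (by positivity)
  have heq : (WithLp.equiv 2 (Fin m → ℝ)).symm (fun i => (f + g) (y i)) =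
      (WithLp.equiv 2 (Fin m → ℝ)).symm (fun i => f (y i)) +
      (WithLp.equiv 2 (Fin m → ℝ)).symm (fun i => g (y i)) := by
    ext i; simp
  rw [heq]
  exact norm_add_le _ _

lemma aux_empNorm_le_bound {d m : ℕ} (hm : 1 ≤ m) (y : Fin m → (Fin d → ℝ))
    {f : (Fin d → ℝ) → ℝ} {B : ℝ} (hB0 : 0 ≤ B) (h : ∀ i, |f (y i)| ≤ B) :
    empNorm y f ≤ B := by
  have hsum : (∑ i, f (y i) ^ 2) ≤ m * B ^ 2 := by
    calc (∑ i, f (y i) ^ 2) ≤ ∑ _i : Fin m, B ^ 2 :=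
      Finset.sum_le_sum fun i _ => by nlinarith [sq_abs (f (y i)), h i, abs_nonneg (f (y i))]
    _ = m * B ^ 2 := by simp [Finset.sum_const, mul_comm]
  have hm0 : (0:ℝ) < m := by exact_mod_cast hm
  calc empNorm y f ≤ Real.sqrt (B ^ 2) := by
        apply Real.sqrt_le_sqrt
        rw [div_le_iff₀ hm0]
        linarith [hsum]
  _ = B := Real.sqrt_sq hB0

lemma aux_dc_step {d : ℕ} (hd : 1 ≤ d) (T : Finset (Fin d → ℕ)) (hT : DownwardClosed T) :
    ∃ μ ∉ T, DownwardClosed (insert μ T) := by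
  classical
  set K : Set ℕ := {k : ℕ | ∃ ν : Fin d → ℕ, ν ∉ T ∧ (∑ j, ν j) = k} with hK
  have hne : K.Nonempty := by
    set ν₀ : Fin d → ℕ := fun _ => (T.sup fun ν => ν ⟨0, hd⟩) + 1 with hν₀
    refine ⟨∑ j, ν₀ j, ν₀, fun hmem => ?_, rfl⟩
    have h1 := Finset.le_sup (f := fun ν => ν ⟨0, hd⟩) hmem
    have h2 : ν₀ ⟨0, hd⟩ ≤ T.sup fun ν => ν ⟨0, hd⟩ := h1
    have h3 : ν₀ ⟨0, hd⟩ = (T.sup fun ν => ν ⟨0, hd⟩) + 1 := rfl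
    rw [h3] at h2
    exact Nat.not_succ_le_self _ h2
  obtain ⟨μ, hμT, hμd⟩ := Nat.sInf_mem hne
  refine ⟨μ, hμT, fun ν hν μ' hle => ?_⟩
  rcases Finset.mem_insert.1 hν with h | h
  · by_cases hμ' : μ' = μ
    · rw [hμ']; exact Finset.mem_insert_self _ _
    · refine Finset.mem_insert_of_mem ?_
      by_contra hnT
      have hlt : ∑ j, μ' j < ∑ j, μ j := by
        have hle' : ∀ i, μ' i ≤ μ i := fun i => h ▸ hle i
        obtain ⟨j, hj⟩ : ∃ j, μ' j ≠ μ j := Function.ne_iff.1 hμ'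
        exact Finset.sum_lt_sum (fun i _ => hle' i)
          ⟨j, Finset.mem_univ j, lt_of_le_of_ne (hle' j) hj⟩
      have hKmem : (∑ j, μ' j) ∈ K := ⟨μ', hnT, rfl⟩
      have := Nat.sInf_le hKmem
      omega
  · exact Finset.mem_insert_of_mem (hT ν h μ' hle)

lemma aux_dc_extend {d : ℕ} (hd : 1 ≤ d) (S : Finset (Fin d → ℕ)) (hS : DownwardClosed S)
    (k : ℕ) (hk : S.card ≤ k) : ∃ T, S ⊆ T ∧ DownwardClosed T ∧ T.card = k := by
  induction k, hk using Nat.le_induction with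
  | base => exact ⟨S, subset_rfl, hS, rfl⟩
  | succ k hk ih =>
    obtain ⟨T, hST, hT, hTc⟩ := ih
    obtain ⟨μ, hμ, hins⟩ := aux_dc_step hd T hT
    exact ⟨insert μ T, hST.trans (Finset.subset_insert _ _), hins,
      by rw [Finset.card_insert_of_notMem hμ, hTc]⟩

lemma aux_polySpace_mono {d : ℕ} {Λ Λ' : Finset (Fin d → ℕ)} (h : Λ ⊆ Λ') :
    polySpace Λ ≤ polySpace Λ' :=
  Submodule.span_mono (fun _f ⟨ν, hν, hf⟩ => ⟨ν, h hν, hf⟩)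

/-- For any downward closed `Λ` of cardinality `n` and any `v ∈ P_Λ`,
`‖u − w_n‖ ≤ (1 + 2√(C_{2n−1}^d)) ‖u − v‖_{L^∞(Γ)}`, where the sup norm over
`Γ = [−1,1]^d` is expressed through an arbitrary upper bound `B` of `|u − v|` on `Γ`. -/
theorem optimized_ls_sup_comparison (d n m : ℕ) (hd : 1 ≤ d) (hn : 1 ≤ n) (hm : 1 ≤ m)
    (ρ : Measure (Fin d → ℝ)) [IsProbabilityMeasure ρ]
    (hsupp : ∀ᵐ z ∂ρ, ∀ j, |z j| ≤ 1)
    (u : (Fin d → ℝ) → ℝ) (hu : MemLp u 2 ρ)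
    (y : Fin m → (Fin d → ℝ)) (hy : ∀ i, ∀ j, |y i j| ≤ 1)
    (C : ℝ) (hC0 : 0 ≤ C)
    (hC : ∀ Λ' : Finset (Fin d → ℕ), DownwardClosed Λ' → Λ'.card = 2 * n - 1 →
      ∀ p ∈ polySpace Λ', (L2norm ρ p) ^ 2 ≤ C * (empNorm y p) ^ 2)
    (Λopt : Finset (Fin d → ℕ)) (hΛopt : DownwardClosed Λopt) (hcopt : Λopt.card = n)
    (w : (Fin d → ℝ) → ℝ) (hw : w ∈ polySpace Λopt)
    (hwmin : ∀ Λ' : Finset (Fin d → ℕ), DownwardClosed Λ' → Λ'.card = n →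
      ∀ v' ∈ polySpace Λ', empNorm y (u - w) ≤ empNorm y (u - v'))
    (Λ : Finset (Fin d → ℕ)) (hΛ : DownwardClosed Λ) (hc : Λ.card = n)
    (v : (Fin d → ℝ) → ℝ) (hv : v ∈ polySpace Λ)
    (B : ℝ) (hB : ∀ z : Fin d → ℝ, (∀ j, |z j| ≤ 1) → |u z - v z| ≤ B) :
    L2norm ρ (u - w) ≤ (1 + 2 * Real.sqrt C) * B := by
  classical
  have hB0 : 0 ≤ B := le_trans (abs_nonneg _) (hB (fun _ => 0) (fun j => by simp))
  -- Memℒp facts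
  have hv2 : MemLp v 2 ρ := aux_polySpace_memLp hsupp hv
  have hw2 : MemLp w 2 ρ := aux_polySpace_memLp hsupp hw
  have huv : MemLp (u - v) 2 ρ := hu.sub hv2
  have hvw : MemLp (v - w) 2 ρ := hv2.sub hw2
  -- the big downward closed set
  have h0Λ : (fun _ => 0 : Fin d → ℕ) ∈ Λ := by
    obtain ⟨ν, hν⟩ := Finset.card_pos.1 (by omega : 0 < Λ.card)
    exact hΛ ν hν _ (fun j => Nat.zero_le _)
  have h0Λopt : (fun _ => 0 : Fin d → ℕ) ∈ Λopt := by
    obtain ⟨ν, hν⟩ := Finset.card_pos.1 (by omega : 0 < Λopt.card)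
    exact hΛopt ν hν _ (fun j => Nat.zero_le _)
  have hUcard : (Λ ∪ Λopt).card ≤ 2 * n - 1 := by
    have h1 : (Λ ∪ Λopt).card + (Λ ∩ Λopt).card = Λ.card + Λopt.card :=
      Finset.card_union_add_card_inter _ _
    have h2 : 0 < (Λ ∩ Λopt).card :=
      Finset.card_pos.2 ⟨_, Finset.mem_inter.2 ⟨h0Λ, h0Λopt⟩⟩
    omega
  have hUdc : DownwardClosed (Λ ∪ Λopt) := by
    intro ν hν μ hle
    rcases Finset.mem_union.1 hν with h | h
    · exact Finset.mem_union_left _ (hΛ ν h μ hle)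
    · exact Finset.mem_union_right _ (hΛopt ν h μ hle)
  obtain ⟨T, hUT, hTdc, hTcard⟩ := aux_dc_extend hd (Λ ∪ Λopt) hUdc (2 * n - 1) hUcard
  have hvwT : v - w ∈ polySpace T := by
    have hvT : v ∈ polySpace T :=
      aux_polySpace_mono ((Finset.subset_union_left).trans hUT) hv
    have hwT : w ∈ polySpace T :=
      aux_polySpace_mono ((Finset.subset_union_right).trans hUT) hw
    exact Submodule.sub_mem _ hvT hwT
  -- empirical norm bounds
  have hempuv : empNorm y (u - v) ≤ B := by
    refine aux_empNorm_le_bound hm y hB0 fun i => ?_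
    simpa using hB (y i) (hy i)
  have hempuw : empNorm y (u - w) ≤ empNorm y (u - v) := hwmin Λ hΛ hc v hv
  have hempvu : empNorm y (v - u) = empNorm y (u - v) := by
    unfold empNorm
    congr 2
    exact Finset.sum_congr rfl fun i _ => by simp [Pi.sub_apply]; ring
  have hempvw : empNorm y (v - w) ≤ 2 * B := by
    have : v - w = (v - u) + (u - w) := by ring
    rw [this]
    calc empNorm y ((v - u) + (u - w)) ≤ empNorm y (v - u) + empNorm y (u - w) :=
      aux_empNorm_add_le y _ _
    _ ≤ B + B := add_le_add (hempvu ▸ hempuv) (hempuw.trans hempuv)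
    _ = 2 * B := by ring
  -- L2 bound on v - w
  have hL2vw : L2norm ρ (v - w) ≤ Real.sqrt C * (2 * B) := by
    have hsq := hC T hTdc hTcard (v - w) hvwT
    have h1 : L2norm ρ (v - w) = Real.sqrt ((L2norm ρ (v - w)) ^ 2) :=
      (Real.sqrt_sq (Real.sqrt_nonneg _)).symm
    rw [h1]
    calc Real.sqrt ((L2norm ρ (v - w)) ^ 2) ≤ Real.sqrt (C * (empNorm y (v - w)) ^ 2) :=
      Real.sqrt_le_sqrt hsq
    _ = Real.sqrt C * empNorm y (v - w) := by
        rw [Real.sqrt_mul hC0,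
          Real.sqrt_sq (show (0:ℝ) ≤ empNorm y (v - w) from Real.sqrt_nonneg _)]
    _ ≤ Real.sqrt C * (2 * B) :=
        mul_le_mul_of_nonneg_left hempvw (Real.sqrt_nonneg _)
  -- L2 bound on u - v
  have hL2uv : L2norm ρ (u - v) ≤ B := by
    refine aux_L2norm_le_bound ρ hB0 (hu.1.sub (aux_polySpace_prop hv).1.aestronglyMeasurable) ?_
    filter_upwards [hsupp] with z hz
    simpa using hB z hz
  -- triangle
  have htri : L2norm ρ (u - w) ≤ L2norm ρ (u - v) + L2norm ρ (v - w) := by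
    have : u - w = (u - v) + (v - w) := by ring
    rw [this]
    exact aux_L2norm_add_le ρ huv hvw
  calc L2norm ρ (u - w) ≤ L2norm ρ (u - v) + L2norm ρ (v - w) := htri
  _ ≤ B + Real.sqrt C * (2 * B) := add_le_add hL2uv hL2vw
  _ = (1 + 2 * Real.sqrt C) * B := by ring
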